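/- Let E be a Fréchet space and T ∈ L(E) a continuous linear operator such that Tⁿ x / n → 0 for every x ∈ E. Then for every λ ∈ ℂ with |λ| > 1, the operator λI − T is bijective with continuous inverse given by the convergent Neumann series (1/λ)∑_{n≥0} Tⁿ/λⁿ; consequently the spectrum of T is contained in the closed unit disk. -/

import Mathlib

open Filter
open scoped ComplexOrder

lemma aux_smul_real_complex {E : Type*} [AddCommGroup E] [Module ℂ E] [Module ℝ E]
    [IsScalarTower ℝ ℂ E] (t : ℝ) (v : E) : t • v = (t : ℂ) • v := by
  rw [← algebraMap_smul ℂ t v, Complex.coe_algebraMap]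

lemma aux_sum_mem {E : Type*} [AddCommGroup E] [Module ℂ E] [Module ℝ E]
    [IsScalarTower ℝ ℂ E] {U : Set E} (hU0 : (0 : E) ∈ U)
    (hUb : Balanced ℂ U) (hUc : Convex ℝ U) (s : Finset ℕ) (c : ℕ → ℂ) (y : ℕ → E)
    (hy : ∀ k ∈ s, y k ∈ U) (hc : ∑ k ∈ s, ‖c k‖ ≤ 1) :
    (∑ k ∈ s, c k • y k) ∈ U := by
  classical
  set d : ℕ → ℂ := fun k => if c k = 0 then 0 else c k / ‖c k‖ with hd_def
  have hd : ∀ k, ‖d k‖ ≤ 1 := by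
    intro k
    by_cases h : c k = 0
    · simp [hd_def, h]
    · have hnz : (‖c k‖ : ℝ) ≠ 0 := norm_ne_zero_iff.2 h
      simp [hd_def, h, norm_div, Complex.norm_real, abs_of_nonneg (norm_nonneg (c k)),
        div_self hnz]
  have hrepr : ∀ k, c k • y k = ‖c k‖ • (d k • y k) := by
    intro k
    by_cases h : c k = 0
    · simp [hd_def, h]
    · have hnz : ((‖c k‖ : ℝ) : ℂ) ≠ 0 := by
        simpa using norm_ne_zero_iff.2 h
      rw [aux_smul_real_complex, smul_smul]
      congr 1
      simp only [hd_def, if_neg h]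
      rw [mul_comm, div_mul_cancel₀ _ hnz]
  have hdy : ∀ k ∈ s, d k • y k ∈ U := fun k hk => hUb.smul_mem (hd k) (hy k hk)
  obtain ⟨j, hj⟩ := Infinite.exists_notMem_finset s
  set t := ∑ k ∈ s, ‖c k‖ with ht_def
  have ht0 : (0 : ℝ) ≤ t := Finset.sum_nonneg fun k _ => norm_nonneg _
  set w : ℕ → ℝ := fun k => if k = j then 1 - t else ‖c k‖ with hw_def
  set p : ℕ → E := fun k => if k = j then 0 else d k • y k with hp_def
  have hmem : (∑ k ∈ insert j s, w k • p k) ∈ U := by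
    refine hUc.sum_mem ?_ ?_ ?_
    · intro i _
      by_cases h : i = j
      · simp only [hw_def]; rw [if_pos h]; linarith
      · simp only [hw_def]; rw [if_neg h]; exact norm_nonneg _
    · rw [Finset.sum_insert hj]
      have h1 : ∑ k ∈ s, w k = t := by
        rw [ht_def]
        refine Finset.sum_congr rfl fun k hk => ?_
        have hk' : k ≠ j := fun h => hj (h ▸ hk)
        simp only [hw_def]; rw [if_neg hk']
      have h2 : w j = 1 - t := by simp [hw_def]
      rw [h1, h2]; ring
    · intro i hi
      by_cases h : i = j
      · simp only [hp_def]; rw [if_pos h]; exact hU0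
      · have his : i ∈ s := by
          rcases Finset.mem_insert.mp hi with h' | h'
          · exact absurd h' h
          · exact h'
        simp only [hp_def]; rw [if_neg h]; exact hdy i his
  have hsum_eq : ∑ k ∈ insert j s, w k • p k = ∑ k ∈ s, c k • y k := by
    rw [Finset.sum_insert hj]
    have h2 : w j • p j = 0 := by
      simp [hw_def, hp_def]
    rw [h2, zero_add]
    refine Finset.sum_congr rfl fun k hk => ?_
    have hk' : k ≠ j := fun h => hj (h ▸ hk)
    have hw : w k = ‖c k‖ := by simp only [hw_def]; rw [if_neg hk']
    have hp : p k = d k • y k := by simp only [hp_def]; rw [if_neg hk']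
    rw [hw, hp, ← hrepr]
  rwa [hsum_eq] at hmem

theorem stmt_17 {E : Type*} [AddCommGroup E] [Module ℂ E] [UniformSpace E]
    [IsUniformAddGroup E] [ContinuousSMul ℂ E] [CompleteSpace E]
    [TopologicalSpace.MetrizableSpace E]
    [Module ℝ E] [IsScalarTower ℝ ℂ E] [LocallyConvexSpace ℝ E]
    (T : E →L[ℂ] E)
    (hT : ∀ x : E, Tendsto (fun n : ℕ => (n : ℂ)⁻¹ • (T ^ n) x) atTop (nhds 0)) :
    (∀ z : ℂ, 1 < ‖z‖ → ∃ R : E →L[ℂ] E,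
        (∀ x : E, Tendsto
          (fun N : ℕ => z⁻¹ • ∑ n ∈ Finset.range N, (z⁻¹) ^ n • (T ^ n) x)
          atTop (nhds (R x))) ∧
        R.comp (z • ContinuousLinearMap.id ℂ E - T) = ContinuousLinearMap.id ℂ E ∧
        (z • ContinuousLinearMap.id ℂ E - T).comp R = ContinuousLinearMap.id ℂ E) ∧
      spectrum ℂ T ⊆ Metric.closedBall (0 : ℂ) 1 := by
  classical
  haveI : SMulCommClass ℝ ℂ E :=
    ⟨fun r c v => by
      rw [aux_smul_real_complex, aux_smul_real_complex, smul_smul, smul_smul, mul_comm]⟩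
  haveI : ContinuousSMul ℝ E := by
    refine ⟨?_⟩
    have h : (fun p : ℝ × E => p.1 • p.2) = fun p : ℝ × E => ((p.1 : ℂ)) • p.2 :=
      funext fun p => aux_smul_real_complex _ _
    rw [h]
    exact (Complex.continuous_ofReal.comp continuous_fst).smul continuous_snd
  haveI : (uniformity E).IsCountablyGenerated := by
    rw [uniformity_eq_comap_nhds_zero E]; infer_instance
  haveI : LocallyConvexSpace ℂ E := by
    refine (locallyConvexSpace_iff_exists_convex_subset_zero ℂ E).mpr fun U hU => ?_
    obtain ⟨S, hS, hSc, hSU⟩ :=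
      (locallyConvexSpace_iff_exists_convex_subset_zero ℝ E).mp ‹_› U hU
    refine ⟨S, hS, ?_, hSU⟩
    intro x hx y hy a b ha hb hab
    have ea : a = ((a.re : ℝ) : ℂ) := Complex.ext rfl (by simpa using (Complex.nonneg_iff.mp ha).2.symm)
    have eb : b = ((b.re : ℝ) : ℂ) := Complex.ext rfl (by simpa using (Complex.nonneg_iff.mp hb).2.symm)
    rw [ea, eb, ← aux_smul_real_complex, ← aux_smul_real_complex]
    exact hSc hx hy (Complex.nonneg_iff.mp ha).1 (Complex.nonneg_iff.mp hb).1
      (by simpa using congrArg Complex.re hab)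
  have hq := with_gaugeSeminormFamily (𝕜 := ℂ) (E := E)
  have main : ∀ z : ℂ, 1 < ‖z‖ → ∃ R : E →L[ℂ] E,
      (∀ x : E, Tendsto
        (fun N : ℕ => z⁻¹ • ∑ n ∈ Finset.range N, (z⁻¹) ^ n • (T ^ n) x)
        atTop (nhds (R x))) ∧
      R.comp (z • ContinuousLinearMap.id ℂ E - T) = ContinuousLinearMap.id ℂ E ∧
      (z • ContinuousLinearMap.id ℂ E - T).comp R = ContinuousLinearMap.id ℂ E := by
    intro z hz
    have hz0 : z ≠ 0 := by
      intro h; rw [h, norm_zero] at hz; linarith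
    have hr : ‖z⁻¹‖ < 1 := by
      rw [norm_inv]
      exact inv_lt_one_of_one_lt₀ hz
    have hr0 : (0 : ℝ) ≤ ‖z⁻¹‖ := norm_nonneg _
    have hA : Summable (fun n : ℕ => (n : ℝ) * ‖z⁻¹‖ ^ n) := by
      have := summable_pow_mul_geometric_of_norm_lt_one (R := ℝ) 1 (r := ‖z⁻¹‖)
        (by rwa [Real.norm_eq_abs, abs_of_nonneg hr0])
      simpa using this
    -- Cauchy sequence of partial sums
    have hcauchy : ∀ x : E,
        CauchySeq (fun N : ℕ => ∑ n ∈ Finset.range N, (z⁻¹) ^ n • (T ^ n) x) := by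
      have hAc : CauchySeq (fun N : ℕ => ∑ n ∈ Finset.range N, (n : ℝ) * ‖z⁻¹‖ ^ n) :=
        hA.hasSum.tendsto_sum_nat.cauchySeq
      obtain ⟨N₁, hN₁⟩ := Metric.cauchySeq_iff.mp hAc 1 one_pos
      intro x
      have basis := nhds_hasBasis_absConvex ℂ E
      rw [(basis.uniformity_of_nhds_zero).cauchySeq_iff]
      rintro U ⟨hU, hUb, hUc⟩
      have hU0 : (0 : E) ∈ U := mem_of_mem_nhds hU
      obtain ⟨N₀, hN₀⟩ : ∃ N₀ : ℕ, ∀ n ≥ N₀, (n : ℂ)⁻¹ • (T ^ n) x ∈ U := by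
        have h := (hT x).eventually (eventually_of_mem hU fun y hy => hy)
        exact eventually_atTop.mp h
      refine ⟨max N₀ N₁ + 1, ?_⟩
      have key : ∀ m n : ℕ, max N₀ N₁ + 1 ≤ m → m ≤ n →
          (∑ k ∈ Finset.range n, (z⁻¹) ^ k • (T ^ k) x)
            - (∑ k ∈ Finset.range m, (z⁻¹) ^ k • (T ^ k) x) ∈ U := by
        intro m n hm hmn
        rw [← Finset.sum_Ico_eq_sub _ hmn]
        have heq : ∀ k ∈ Finset.Ico m n,
            (z⁻¹) ^ k • (T ^ k) x = ((k : ℂ) * (z⁻¹) ^ k) • ((k : ℂ)⁻¹ • (T ^ k) x) := by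
          intro k hk
          have hk1 : 1 ≤ k := le_trans (le_trans (Nat.le_add_left 1 (max N₀ N₁)) hm)
            (Finset.mem_Ico.mp hk).1
          have hknz : (k : ℂ) ≠ 0 := Nat.cast_ne_zero.2 (by omega)
          rw [smul_smul, mul_comm (k : ℂ), mul_assoc, mul_inv_cancel₀ hknz, mul_one]
        rw [Finset.sum_congr rfl heq]
        refine aux_sum_mem hU0 hUb (hUc.lift ℝ) _ _ _ ?_ ?_
        · intro k hk
          refine hN₀ k ?_
          have h1 := (Finset.mem_Ico.mp hk).1
          have h2 := le_trans (Nat.le_max_left N₀ N₁) (by omega : max N₀ N₁ ≤ m)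
          omega
        · have hnorm : ∀ k ∈ Finset.Ico m n,
              ‖(k : ℂ) * (z⁻¹) ^ k‖ = (k : ℝ) * ‖z⁻¹‖ ^ k := by
            intro k _
            rw [norm_mul, norm_pow, Complex.norm_natCast]
          rw [Finset.sum_congr rfl hnorm, Finset.sum_Ico_eq_sub _ hmn]
          have hmN : N₁ ≤ m := le_trans (Nat.le_max_right N₀ N₁) (by omega)
          have hd := hN₁ n (by omega) m (by omega)
          rw [Real.dist_eq] at hd
          have hle : ∑ k ∈ Finset.range n, (k : ℝ) * ‖z⁻¹‖ ^ k
              - ∑ k ∈ Finset.range m, (k : ℝ) * ‖z⁻¹‖ ^ k ≤ 1 := by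
            calc _ ≤ |∑ k ∈ Finset.range n, (k : ℝ) * ‖z⁻¹‖ ^ k
                - ∑ k ∈ Finset.range m, (k : ℝ) * ‖z⁻¹‖ ^ k| := le_abs_self _
              _ ≤ 1 := le_of_lt hd
          linarith
      intro m hm n hn
      simp only [Set.mem_setOf_eq]
      rcases le_total m n with h | h
      · exact key m n hm h
      · have h1 := key n m hn h
        have h2 := hUb.smul_mem (a := (-1 : ℂ)) (by simp) h1
        rwa [neg_one_smul, neg_sub] at h2
    -- scalar limit
    have hscalar : Tendsto (fun N : ℕ => (N : ℂ) * (z⁻¹) ^ N) atTop (nhds 0) := by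
      rw [tendsto_zero_iff_norm_tendsto_zero]
      refine hA.tendsto_atTop_zero.congr fun N => ?_
      rw [norm_mul, norm_pow, Complex.norm_natCast]
    have hzero : ∀ x : E,
        Tendsto (fun N : ℕ => (z⁻¹) ^ N • (T ^ N) x) atTop (nhds 0) := by
      intro x
      have h1 : Tendsto (fun N : ℕ => ((N : ℂ) * (z⁻¹) ^ N) • ((N : ℂ)⁻¹ • (T ^ N) x))
          atTop (nhds ((0 : ℂ) • (0 : E))) := hscalar.smul (hT x)
      rw [zero_smul] at h1
      refine h1.congr' ?_
      filter_upwards [eventually_ge_atTop 1] with N hN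
      have hknz : (N : ℂ) ≠ 0 := Nat.cast_ne_zero.2 (by omega)
      rw [smul_smul, mul_comm ((N : ℂ)), mul_assoc, mul_inv_cancel₀ hknz, mul_one]
    -- limit function
    have hconv : ∀ x : E, ∃ y : E,
        Tendsto (fun N : ℕ => z⁻¹ • ∑ n ∈ Finset.range N, (z⁻¹) ^ n • (T ^ n) x)
          atTop (nhds y) := by
      intro x
      obtain ⟨y, hy⟩ := cauchySeq_tendsto_of_complete (hcauchy x)
      exact ⟨z⁻¹ • y, hy.const_smul z⁻¹⟩
    choose f hf using hconv
    set g : ℕ → E →L[ℂ] E := fun N => z⁻¹ • ∑ n ∈ Finset.range N, (z⁻¹) ^ n • T ^ n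
      with hg
    have hgx : ∀ (N : ℕ) (x : E),
        g N x = z⁻¹ • ∑ n ∈ Finset.range N, (z⁻¹) ^ n • (T ^ n) x := by
      intro N x
      simp [hg, ContinuousLinearMap.sum_apply]
    let R : E →L[ℂ] E := hq.continuousLinearMapOfTendsto g (f := f)
      (tendsto_pi_nhds.mpr fun x => (hf x).congr fun N => (hgx N x).symm)
    have hf' : ∀ x : E,
        Tendsto (fun N : ℕ => z⁻¹ • ∑ n ∈ Finset.range N, (z⁻¹) ^ n • (T ^ n) x)
          atTop (nhds (R x)) := fun x => hf x
    -- telescoping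
    have htel : ∀ (x : E) (N : ℕ),
        ∑ n ∈ Finset.range N, ((z⁻¹) ^ n • (T ^ n) x - (z⁻¹) ^ (n + 1) • (T ^ (n + 1)) x)
          = x - (z⁻¹) ^ N • (T ^ N) x := by
      intro x N
      rw [Finset.sum_range_sub' (fun n => (z⁻¹) ^ n • (T ^ n) x)]
      simp
    have hpow1 : ∀ (n : ℕ) (v : E), T ((T ^ n) v) = (T ^ (n + 1)) v := by
      intro n v; rw [pow_succ']; rfl
    have hpow2 : ∀ (n : ℕ) (v : E), (T ^ n) (T v) = (T ^ (n + 1)) v := by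
      intro n v; rw [pow_succ]; rfl
    have hAx : ∀ (x : E) (N : ℕ),
        (z • ContinuousLinearMap.id ℂ E - T)
            (z⁻¹ • ∑ n ∈ Finset.range N, (z⁻¹) ^ n • (T ^ n) x)
          = x - (z⁻¹) ^ N • (T ^ N) x := by
      intro x N
      have hTS : T (z⁻¹ • ∑ n ∈ Finset.range N, (z⁻¹) ^ n • (T ^ n) x)
          = ∑ n ∈ Finset.range N, (z⁻¹) ^ (n + 1) • (T ^ (n + 1)) x := by
        rw [map_smul, map_sum, Finset.smul_sum]
        refine Finset.sum_congr rfl fun n _ => ?_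
        rw [map_smul, smul_smul, ← pow_succ', hpow1 n x]
      rw [ContinuousLinearMap.sub_apply, ContinuousLinearMap.smul_apply,
        ContinuousLinearMap.id_apply, smul_smul, mul_inv_cancel₀ hz0, one_smul, hTS,
        ← htel x N, Finset.sum_sub_distrib]
    have hBx : ∀ (x : E) (N : ℕ),
        z⁻¹ • ∑ n ∈ Finset.range N,
            (z⁻¹) ^ n • (T ^ n) ((z • ContinuousLinearMap.id ℂ E - T) x)
          = x - (z⁻¹) ^ N • (T ^ N) x := by
      intro x N
      rw [← htel x N, Finset.smul_sum]
      refine Finset.sum_congr rfl fun n _ => ?_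
      have h1 : (z • ContinuousLinearMap.id ℂ E - T) x = z • x - T x := by
        simp [ContinuousLinearMap.sub_apply]
      have h2 : (T ^ n) (z • x - T x) = z • (T ^ n) x - (T ^ (n + 1)) x := by
        rw [map_sub, map_smul, hpow2 n x]
      rw [h1, h2]
      simp only [smul_sub, smul_smul]
      congr 1
      · congr 1
        field_simp
      · congr 1
        rw [← pow_succ']
    refine ⟨R, hf', ?_, ?_⟩
    · ext x
      have h1 := hf' ((z • ContinuousLinearMap.id ℂ E - T) x)
      have h2 : Tendsto (fun N : ℕ => z⁻¹ • ∑ n ∈ Finset.range N,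
          (z⁻¹) ^ n • (T ^ n) ((z • ContinuousLinearMap.id ℂ E - T) x))
          atTop (nhds x) := by
        simp_rw [hBx]
        simpa using tendsto_const_nhds.sub (hzero x)
      have h3 := tendsto_nhds_unique h1 h2
      simpa using h3
    · ext x
      have h1 : Tendsto (fun N : ℕ => (z • ContinuousLinearMap.id ℂ E - T)
          (z⁻¹ • ∑ n ∈ Finset.range N, (z⁻¹) ^ n • (T ^ n) x))
          atTop (nhds ((z • ContinuousLinearMap.id ℂ E - T) (R x))) :=
        (((z • ContinuousLinearMap.id ℂ E - T).continuous.tendsto _).comp (hf' x))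
      have h2 : Tendsto (fun N : ℕ => (z • ContinuousLinearMap.id ℂ E - T)
          (z⁻¹ • ∑ n ∈ Finset.range N, (z⁻¹) ^ n • (T ^ n) x))
          atTop (nhds x) := by
        simp_rw [hAx]
        simpa using tendsto_const_nhds.sub (hzero x)
      have h3 := tendsto_nhds_unique h1 h2
      simpa using h3
  refine ⟨main, ?_⟩
  intro z hz
  rw [Metric.mem_closedBall, dist_zero_right]
  by_contra h
  push_neg at h
  obtain ⟨R, _, h2, h3⟩ := main z h
  have hAeq : (z • ContinuousLinearMap.id ℂ E - T) = algebraMap ℂ (E →L[ℂ] E) z - T := by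
    rw [Algebra.algebraMap_eq_smul_one]; rfl
  have hunit : IsUnit (algebraMap ℂ (E →L[ℂ] E) z - T) := by
    rw [← hAeq]
    exact ⟨⟨z • ContinuousLinearMap.id ℂ E - T, R, h3, h2⟩, rfl⟩
  exact (spectrum.mem_iff.mp hz) hunit
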